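/- In the minority game with 2k+1 players, for m ≥ 2 mixers and ℓ ≥ r with ℓ + 1 < r + m, the function λ ↦ v₋(ℓ+1,r,λ) - v₊(ℓ,r+1,λ) is strictly decreasing on (0,1), is positive at λ = 0 and negative at λ = 1, where v₋(ℓ+1,r,λ) = ∑_{s=0}^{m-1} C(m-1,s) λ^s (1-λ)^{m-1-s} f(ℓ+1+s) and v₊(ℓ,r+1,λ) = ∑_{s=0}^{m-1} C(m-1,s) λ^s (1-λ)^{m-1-s} f(r+m-s). -/

import Mathlib

open Finset


lemma bern_hasDerivAt (p : ℕ) (c : ℕ → ℝ) (x : ℝ) :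
    HasDerivAt (fun y : ℝ => ∑ s ∈ Finset.range (p + 2),
        ((p + 1).choose s : ℝ) * y ^ s * (1 - y) ^ (p + 1 - s) * c s)
      (((p : ℝ) + 1) * ∑ s ∈ Finset.range (p + 1),
        (p.choose s : ℝ) * x ^ s * (1 - x) ^ (p - s) * (c (s + 1) - c s)) x := by
  have hterm : ∀ s ∈ Finset.range (p + 2),
      HasDerivAt (fun y : ℝ => ((p + 1).choose s : ℝ) * y ^ s * (1 - y) ^ (p + 1 - s) * c s)
        ((((p + 1).choose s : ℝ) * ((s : ℝ) * x ^ (s - 1)) * (1 - x) ^ (p + 1 - s)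
          + ((p + 1).choose s : ℝ) * x ^ s
            * (((p + 1 - s : ℕ) : ℝ) * (1 - x) ^ (p + 1 - s - 1) * (-1))) * c s) x := by
    intro s _
    have hinner : HasDerivAt (fun y : ℝ => 1 - y) (-1 : ℝ) x := by
      simpa using (hasDerivAt_id' x).const_sub (1 : ℝ)
    have h2 : HasDerivAt (fun y : ℝ => (1 - y) ^ (p + 1 - s))
        (((p + 1 - s : ℕ) : ℝ) * (1 - x) ^ (p + 1 - s - 1) * (-1)) x :=
      (hasDerivAt_pow (p + 1 - s) (1 - x)).comp x hinner
    exact (((hasDerivAt_pow s x).const_mul _).mul h2).mul_const (c s)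
  have h := HasDerivAt.fun_sum hterm
  refine h.congr_deriv (Eq.symm ?_)
  set A : ℕ → ℝ := fun s =>
    ((p + 1).choose s : ℝ) * (s : ℝ) * x ^ (s - 1) * (1 - x) ^ (p + 1 - s) * c s with hAdef
  set B : ℕ → ℝ := fun s =>
    ((p + 1).choose s : ℝ) * ((p + 1 - s : ℕ) : ℝ) * x ^ s * (1 - x) ^ (p + 1 - s - 1) * c s
    with hBdef
  have key : (∑ s ∈ Finset.range (p + 2),
      ((((p + 1).choose s : ℝ) * ((s : ℝ) * x ^ (s - 1)) * (1 - x) ^ (p + 1 - s)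
          + ((p + 1).choose s : ℝ) * x ^ s
            * (((p + 1 - s : ℕ) : ℝ) * (1 - x) ^ (p + 1 - s - 1) * (-1))) * c s))
      = ∑ s ∈ Finset.range (p + 1), (A (s + 1) - B s) := by
    calc (∑ s ∈ Finset.range (p + 2),
        ((((p + 1).choose s : ℝ) * ((s : ℝ) * x ^ (s - 1)) * (1 - x) ^ (p + 1 - s)
          + ((p + 1).choose s : ℝ) * x ^ s
            * (((p + 1 - s : ℕ) : ℝ) * (1 - x) ^ (p + 1 - s - 1) * (-1))) * c s))
        = ∑ s ∈ Finset.range (p + 2), (A s - B s) := by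
          refine Finset.sum_congr rfl fun s _ => ?_
          simp only [hAdef, hBdef]; ring
      _ = (∑ s ∈ Finset.range (p + 2), A s) - ∑ s ∈ Finset.range (p + 2), B s :=
          Finset.sum_sub_distrib _ _
      _ = (∑ s ∈ Finset.range (p + 1), A (s + 1)) - ∑ s ∈ Finset.range (p + 1), B s := by
          rw [Finset.sum_range_succ' A, Finset.sum_range_succ B]
          simp [hAdef, hBdef]
      _ = ∑ s ∈ Finset.range (p + 1), (A (s + 1) - B s) := (Finset.sum_sub_distrib _ _).symm
  rw [key, Finset.mul_sum]
  refine Finset.sum_congr rfl fun s hs => ?_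
  simp only [hAdef, hBdef]
  have h1 : p + 1 - (s + 1) = p - s := by omega
  have h3 : p + 1 - s - 1 = p - s := by omega
  rw [h1, h3]
  have e1 : (((p + 1).choose (s + 1) : ℕ) : ℝ) * ((s : ℝ) + 1)
      = ((p : ℝ) + 1) * ((p.choose s : ℕ) : ℝ) := by
    exact_mod_cast congrArg (Nat.cast : ℕ → ℝ) (Nat.add_one_mul_choose_eq p s).symm
  have e2 : (((p + 1).choose s : ℕ) : ℝ) * (((p + 1 - s : ℕ)) : ℝ)
      = ((p : ℝ) + 1) * ((p.choose s : ℕ) : ℝ) := by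
    rw [← e1]
    exact_mod_cast congrArg (Nat.cast : ℕ → ℝ) (Nat.choose_succ_right_eq (p + 1) s).symm
  push_cast
  push_cast at e1 e2
  linear_combination (-(x ^ s * (1 - x) ^ (p - s) * c (s + 1))) * e1
    + (x ^ s * (1 - x) ^ (p - s) * c s) * e2

/-- For m ≥ 2 mixers and ℓ ≥ r with ℓ + 1 < r + m, the difference
λ ↦ v₋(ℓ+1,r,λ) - v₊(ℓ,r+1,λ) is strictly decreasing on (0,1), positive at λ = 0
and negative at λ = 1. -/
theorem stmt_10 (k l r m : ℕ) (hm : 2 ≤ m) (hrl : r ≤ l) (hlt : l + 1 < r + m)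
    (hsum : l + r + m = 2 * k + 1)
    (f : ℕ → ℝ) (hf : StrictAntiOn f (Set.Icc 1 (2 * k + 1))) :
    StrictAntiOn (fun lam : ℝ =>
      (∑ s ∈ Finset.range m, ((m - 1).choose s : ℝ) * lam ^ s * (1 - lam) ^ (m - 1 - s)
          * f (l + 1 + s)) -
        ∑ s ∈ Finset.range m, ((m - 1).choose s : ℝ) * lam ^ s * (1 - lam) ^ (m - 1 - s)
          * f (r + m - s)) (Set.Ioo 0 1) ∧
    (0 < (∑ s ∈ Finset.range m, ((m - 1).choose s : ℝ) * (0:ℝ) ^ s * (1 - 0) ^ (m - 1 - s)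
          * f (l + 1 + s)) -
        ∑ s ∈ Finset.range m, ((m - 1).choose s : ℝ) * (0:ℝ) ^ s * (1 - 0) ^ (m - 1 - s)
          * f (r + m - s)) ∧
    ((∑ s ∈ Finset.range m, ((m - 1).choose s : ℝ) * (1:ℝ) ^ s * (1 - 1) ^ (m - 1 - s)
          * f (l + 1 + s)) -
        ∑ s ∈ Finset.range m, ((m - 1).choose s : ℝ) * (1:ℝ) ^ s * (1 - 1) ^ (m - 1 - s)
          * f (r + m - s) < 0) := by
  obtain ⟨n, rfl⟩ : ∃ n, m = n + 2 := ⟨m - 2, by omega⟩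
  simp only [show n + 2 - 1 = n + 1 from rfl]
  set c : ℕ → ℝ := fun s => f (l + 1 + s) - f (r + (n + 2) - s) with hcdef
  have hmemIcc : ∀ a : ℕ, 1 ≤ a → a ≤ 2 * k + 1 → a ∈ Set.Icc 1 (2 * k + 1) := by
    intro a h1 h2; exact Set.mem_Icc.2 ⟨h1, h2⟩
  have hc : ∀ s, s ≤ n → c (s + 1) < c s := by
    intro s hs
    simp only [hcdef]
    have h1 : f (l + 1 + (s + 1)) < f (l + 1 + s) :=
      hf (hmemIcc _ (by omega) (by omega)) (hmemIcc _ (by omega) (by omega)) (by omega)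
    have h2 : f (r + (n + 2) - s) < f (r + (n + 2) - (s + 1)) :=
      hf (hmemIcc _ (by omega) (by omega)) (hmemIcc _ (by omega) (by omega)) (by omega)
    exact sub_lt_sub h1 h2
  have h0 : ∀ g : ℕ → ℝ, ∑ s ∈ Finset.range (n + 2),
      ((n + 1).choose s : ℝ) * (0:ℝ) ^ s * (1 - 0) ^ (n + 1 - s) * g s = g 0 := by
    intro g
    rw [Finset.sum_eq_single 0]
    · simp
    · intro s hs hne; simp [zero_pow hne]
    · simp
  have h1 : ∀ g : ℕ → ℝ, ∑ s ∈ Finset.range (n + 2),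
      ((n + 1).choose s : ℝ) * (1:ℝ) ^ s * (1 - 1) ^ (n + 1 - s) * g s = g (n + 1) := by
    intro g
    rw [Finset.sum_eq_single (n + 1)]
    · simp
    · intro s hs hne
      have hlt' : s < n + 1 := by simp only [Finset.mem_range] at hs; omega
      have : n + 1 - s ≠ 0 := by omega
      simp [zero_pow this]
    · simp
  refine ⟨?_, ?_, ?_⟩
  · -- strict anti
    have hfun : (fun lam : ℝ =>
        (∑ s ∈ Finset.range (n + 2), ((n + 1).choose s : ℝ) * lam ^ s * (1 - lam) ^ (n + 1 - s)
            * f (l + 1 + s)) -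
          ∑ s ∈ Finset.range (n + 2), ((n + 1).choose s : ℝ) * lam ^ s * (1 - lam) ^ (n + 1 - s)
            * f (r + (n + 2) - s))
        = fun lam : ℝ => ∑ s ∈ Finset.range (n + 2),
            ((n + 1).choose s : ℝ) * lam ^ s * (1 - lam) ^ (n + 1 - s) * c s := by
      funext lam
      rw [← Finset.sum_sub_distrib]
      exact Finset.sum_congr rfl fun s _ => by simp only [hcdef]; ring
    rw [hfun]
    apply strictAntiOn_of_deriv_neg (convex_Ioo 0 1)
    · apply Continuous.continuousOn
      exact continuous_finset_sum _ fun i _ => by continuity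
    · intro x hx
      rw [interior_Ioo] at hx
      rw [(bern_hasDerivAt n c x).deriv]
      apply mul_neg_of_pos_of_neg
      · positivity
      · apply Finset.sum_neg _ (Finset.nonempty_range_iff.2 (Nat.succ_ne_zero n))
        intro s hs
        have hsn : s ≤ n := by simp only [Finset.mem_range] at hs; omega
        have hC : (0:ℝ) < (n.choose s : ℝ) := by exact_mod_cast Nat.choose_pos hsn
        have hx1 : (0:ℝ) < 1 - x := by linarith [hx.2]
        have hneg : c (s + 1) - c s < 0 := sub_neg.2 (hc s hsn)
        exact mul_neg_of_pos_of_neg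
          (mul_pos (mul_pos hC (pow_pos hx.1 s)) (pow_pos hx1 _)) hneg
  · rw [h0 (fun s => f (l + 1 + s)), h0 (fun s => f (r + (n + 2) - s))]
    have : f (r + (n + 2) - 0) < f (l + 1 + 0) :=
      hf (hmemIcc _ (by omega) (by omega)) (hmemIcc _ (by omega) (by omega)) (by omega)
    linarith
  · rw [h1 (fun s => f (l + 1 + s)), h1 (fun s => f (r + (n + 2) - s))]
    have : f (l + 1 + (n + 1)) < f (r + (n + 2) - (n + 1)) :=
      hf (hmemIcc _ (by omega) (by omega)) (hmemIcc _ (by omega) (by omega)) (by omega)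
    linarith
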